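/- For every C ∈ 𝒞(A), the canonical inclusion Σ(C) → Σ is a topological embedding: the subspace topology that the fiber Σ(C) = π⁻¹({C}) inherits from Σ coincides with the weak-* (Gelfand) topology of Σ(C). -/

import Mathlib

open WeakDual WeakDual.CharacterSpace

variable (A : Type*) [NormedRing A] [StarRing A] [CStarRing A] [NormedAlgebra ℂ A]
  [StarModule ℂ A] [CompleteSpace A]

/-- `𝒞(A)`: the poset of commutative unital C*-subalgebras of `A`, i.e. closed, ⋆-closed
commutative subalgebras containing the unit, ordered by inclusion. -/
abbrev CommCStarSubalg :=
  {C : StarSubalgebra ℂ A // IsClosed (C : Set A) ∧ ∀ x ∈ C, ∀ y ∈ C, x * y = y * x}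

/-- `Σ = ∐_{C ∈ 𝒞(A)} Σ(C)`: the disjoint union of the Gelfand spectra (character spaces,
with the relative weak-* topology) of the commutative unital C*-subalgebras of `A`. -/
abbrev GelfandSpec := (C : CommCStarSubalg A) × characterSpace ℂ C.1

variable {A}

/-- `RestrictsTo h ψ φ` says that `ψ ∈ Σ(D)` restricts to `φ ∈ Σ(C)` along `C ⊆ D`,
i.e. `ψ|_C = φ`. -/
def RestrictsTo {C D : CommCStarSubalg A} (h : C ≤ D) (ψ : characterSpace ℂ D.1)
    (φ : characterSpace ℂ C.1) : Prop :=
  ∀ a : C.1, ψ ⟨a.1, h a.2⟩ = φ a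

variable (A)

/-- Conditions (1) and (2) on a subset `𝒰 ⊆ Σ`:
(1) each `𝒰_C = 𝒰 ∩ Σ(C)` is open in `Σ(C)`, and
(2) if `C ⊆ D`, `λ ∈ 𝒰_C` and `λ' ∈ Σ(D)` restricts to `λ`, then `λ' ∈ 𝒰_D`. -/
def IsGoodOpen (U : Set (GelfandSpec A)) : Prop :=
  (∀ C : CommCStarSubalg A,
    IsOpen {φ : characterSpace ℂ C.1 | (⟨C, φ⟩ : GelfandSpec A) ∈ U}) ∧
  (∀ (C D : CommCStarSubalg A) (h : C ≤ D) (φ : characterSpace ℂ C.1)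
    (ψ : characterSpace ℂ D.1), RestrictsTo h ψ φ →
      (⟨C, φ⟩ : GelfandSpec A) ∈ U → (⟨D, ψ⟩ : GelfandSpec A) ∈ U)

/-- The topology on `Σ` whose open sets are those satisfying conditions (1) and (2). -/
instance (priority := 2000) gelfandSpecTopology : TopologicalSpace (GelfandSpec A) where
  IsOpen := IsGoodOpen A
  isOpen_univ := ⟨fun _ => isOpen_univ, fun _ _ _ _ _ _ _ => trivial⟩
  isOpen_inter := fun U V hU hV =>
    ⟨fun C => (hU.1 C).inter (hV.1 C),
     fun C D h φ ψ hr hm => ⟨hU.2 C D h φ ψ hr hm.1, hV.2 C D h φ ψ hr hm.2⟩⟩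
  isOpen_sUnion := fun S hS =>
    ⟨fun C => by
      have : {φ : characterSpace ℂ C.1 | (⟨C, φ⟩ : GelfandSpec A) ∈ ⋃₀ S}
          = ⋃ U ∈ S, {φ : characterSpace ℂ C.1 | (⟨C, φ⟩ : GelfandSpec A) ∈ U} := by
        ext φ; simp
      rw [this]
      exact isOpen_biUnion fun U hU => (hS U hU).1 C,
     fun C D h φ ψ hr hm => by
      obtain ⟨U, hU, hm⟩ := hm
      exact ⟨U, hU, (hS U hU).2 C D h φ ψ hr hm⟩⟩

/-- The Alexandrov topology on `𝒞(A)`: open sets are exactly the upward closed sets. -/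
instance (priority := 2000) commCStarSubalgTopology :
    TopologicalSpace (CommCStarSubalg A) where
  IsOpen U := ∀ ⦃C D : CommCStarSubalg A⦄, C ≤ D → C ∈ U → D ∈ U
  isOpen_univ := fun _ _ _ _ => trivial
  isOpen_inter := fun U V hU hV C D h hm => ⟨hU h hm.1, hV h hm.2⟩
  isOpen_sUnion := fun S hS C D h hm => by
    obtain ⟨U, hU, hm⟩ := hm
    exact ⟨U, hU, hS U hU h hm⟩


variable {A}

/-- The inclusion `C → D` as a continuous linear map. -/
def inclCLM {C D : CommCStarSubalg A} (h : C ≤ D) : C.1 →L[ℂ] D.1 :=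
  { (StarSubalgebra.inclusion h).toAlgHom.toLinearMap with
    cont := Continuous.subtype_mk continuous_subtype_val _ }

/-- Restriction of a character along an inclusion `C ≤ D`. -/
noncomputable def restrictChar {C D : CommCStarSubalg A} (h : C ≤ D) (ψ : characterSpace ℂ D.1) :
    characterSpace ℂ C.1 :=
  ⟨(ψ : WeakDual ℂ D.1).comp (inclCLM h), by
    refine ⟨fun h0 => ?_, fun x y => ?_⟩
    · have h1 : (ψ : WeakDual ℂ D.1).comp (inclCLM h) 1 = 0 := by rw [h0]; rfl
      have : ψ (1 : D.1) = 0 := by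
        have : (inclCLM h) (1 : C.1) = (1 : D.1) := Subtype.ext rfl
        rw [← this]; exact h1
      rw [map_one ψ] at this
      exact one_ne_zero this
    · show ψ ((inclCLM h) (x * y)) = ψ ((inclCLM h) x) * ψ ((inclCLM h) y)
      have : (inclCLM h) (x * y) = (inclCLM h) x * (inclCLM h) y := Subtype.ext rfl
      rw [this, map_mul]⟩

theorem restrictChar_apply {C D : CommCStarSubalg A} (h : C ≤ D) (ψ : characterSpace ℂ D.1)
    (a : C.1) : restrictChar h ψ a = ψ ⟨a.1, h a.2⟩ := rfl

theorem continuous_restrictChar {C D : CommCStarSubalg A} (h : C ≤ D) :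
    Continuous (restrictChar h : characterSpace ℂ D.1 → characterSpace ℂ C.1) :=
  Continuous.subtype_mk
    (WeakDual.continuous_of_continuous_eval fun a =>
      (WeakDual.eval_continuous (⟨a.1, h a.2⟩ : D.1)).comp continuous_subtype_val) _

theorem restrictsTo_restrictChar {C D : CommCStarSubalg A} (h : C ≤ D)
    (ψ : characterSpace ℂ D.1) : RestrictsTo h ψ (restrictChar h ψ) := fun _ => rfl

theorem restrictChar_refl {C : CommCStarSubalg A} (φ : characterSpace ℂ C.1) :
    restrictChar (le_refl C) φ = φ :=
  Subtype.ext (ContinuousLinearMap.ext fun _ => rfl)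

theorem restrictChar_of_restrictsTo {C C' D : CommCStarSubalg A} (h : C ≤ C') (h' : C' ≤ D)
    (φ : characterSpace ℂ C'.1) (ψ : characterSpace ℂ D.1) (hr : RestrictsTo h' ψ φ) :
    restrictChar (h.trans h') ψ = restrictChar h φ :=
  Subtype.ext (ContinuousLinearMap.ext fun a => hr ⟨a.1, h a.2⟩)

variable (A)

/-- For every `C ∈ 𝒞(A)`, the canonical inclusion `Σ(C) → Σ` is a topological embedding:
the subspace topology the fiber `Σ(C) = π⁻¹{C}` inherits from `Σ` coincides with the
weak-* (Gelfand) topology of `Σ(C)`. -/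
theorem isEmbedding_fiber_inclusion (C : CommCStarSubalg A) :
    Topology.IsEmbedding (fun φ : characterSpace ℂ C.1 => (⟨C, φ⟩ : GelfandSpec A)) := by
  constructor
  · constructor
    apply le_antisymm
    · exact continuous_iff_le_induced.mp (by
        rw [continuous_def]; intro U hU; exact hU.1 C)
    · intro V hV
      refine ⟨{p : GelfandSpec A | ∃ h : C ≤ p.1, restrictChar h p.2 ∈ V}, ⟨?_, ?_⟩, ?_⟩
      · intro D
        by_cases h : C ≤ D
        · have : {ψ : characterSpace ℂ D.1 |
              (⟨D, ψ⟩ : GelfandSpec A) ∈ {p : GelfandSpec A | ∃ h : C ≤ p.1,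
                restrictChar h p.2 ∈ V}} = (restrictChar h) ⁻¹' V := by
            ext ψ
            constructor
            · rintro ⟨h', hm⟩; exact hm
            · intro hm; exact ⟨h, hm⟩
          rw [this]
          exact hV.preimage (continuous_restrictChar h)
        · have : {ψ : characterSpace ℂ D.1 |
              (⟨D, ψ⟩ : GelfandSpec A) ∈ {p : GelfandSpec A | ∃ h : C ≤ p.1,
                restrictChar h p.2 ∈ V}} = ∅ := by
            ext ψ; simp only [Set.mem_setOf_eq, Set.mem_empty_iff_false, iff_false]
            rintro ⟨h', _⟩; exact h h'
          rw [this]; exact isOpen_empty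
      · rintro C' D' h' φ ψ hr ⟨h, hm⟩
        exact ⟨h.trans h', by rwa [restrictChar_of_restrictsTo h h' φ ψ hr]⟩
      · ext φ
        simp only [Set.mem_preimage, Set.mem_setOf_eq]
        constructor
        · rintro ⟨h, hm⟩
          rwa [show restrictChar h φ = φ from restrictChar_refl φ] at hm
        · intro hm
          exact ⟨le_refl C, by rwa [restrictChar_refl φ]⟩
  · intro φ ψ h
    simpa using h
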